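/- In one space dimension ($d=1$), let $g\in C^2(\mathbb{R})$ satisfy $g''(v)>0$ for all $v$, and let $G:\mathbb{R}\times\mathbb{R}\to\mathbb{R}$ be $C^1$ with $\partial_v G\ge 0$. Then $F(t,x,v)=G(x-g'(v)t,v)$ is non-decreasing in $v$ for all $(t,x,v)$ with $t\ge 0$ if and only if $\partial_x G(x,v)\le 0$ for all $(x,v)$. -/

import Mathlib

open Real Set

lemma mono_hasDerivAt_nonneg {f : ℝ → ℝ} {d v : ℝ} (hf : Monotone f)
    (h : HasDerivAt f d v) : 0 ≤ d := by
  have h1 : Filter.Tendsto (slope f v) (nhdsWithin v (Set.Ioi v)) (nhds d) :=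
    (hasDerivAt_iff_tendsto_slope.mp h).mono_left
      (nhdsWithin_mono _ (fun y hy => ne_of_gt hy))
  refine ge_of_tendsto h1 ?_
  filter_upwards [self_mem_nhdsWithin] with y hy
  rw [slope_def_field]
  have : v < y := hy
  exact div_nonneg (sub_nonneg.2 (hf this.le)) (sub_nonneg.2 this.le)

theorem stmt_2 (g : ℝ → ℝ) (hg : ContDiff ℝ 2 g)
    (hconv : ∀ v, 0 < deriv (deriv g) v)
    (G : ℝ → ℝ → ℝ) (hG : ContDiff ℝ 1 fun p : ℝ × ℝ => G p.1 p.2)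
    (hGv : ∀ x, Monotone (G x)) :
    (∀ t : ℝ, 0 ≤ t → ∀ x : ℝ, Monotone fun v => G (x - deriv g v * t) v) ↔
      ∀ x v : ℝ, deriv (fun y => G y v) x ≤ 0 := by
  set f : ℝ × ℝ → ℝ := fun p => G p.1 p.2 with hf
  have hfd : Differentiable ℝ f := hG.differentiable one_ne_zero
  have hg2 : ContDiff ℝ (1 + 1) g := by norm_num at hg ⊢; exact hg
  have hg' : ContDiff ℝ 1 (deriv g) := (contDiff_succ_iff_deriv.mp hg2).2.2
  have hg'd : Differentiable ℝ (deriv g) := hg'.differentiable one_ne_zero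
  have hGx : ∀ x v : ℝ, deriv (fun y => G y v) x = fderiv ℝ f (x, v) (1, 0) := by
    intro x v
    have h1 : HasDerivAt (fun y : ℝ => (y, v)) ((1 : ℝ), (0 : ℝ)) x :=
      HasDerivAt.prodMk (hasDerivAt_id x) (hasDerivAt_const x v)
    exact ((hfd (x, v)).hasFDerivAt.comp_hasDerivAt x h1).deriv
  have hGvP : ∀ x v : ℝ, HasDerivAt (G x) (fderiv ℝ f (x, v) (0, 1)) v := by
    intro x v
    have h1 : HasDerivAt (fun w : ℝ => (x, w)) ((0 : ℝ), (1 : ℝ)) v :=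
      HasDerivAt.prodMk (hasDerivAt_const v x) (hasDerivAt_id v)
    exact (hfd (x, v)).hasFDerivAt.comp_hasDerivAt v h1
  have hB0 : ∀ x v : ℝ, 0 ≤ fderiv ℝ f (x, v) (0, 1) := fun x v =>
    mono_hasDerivAt_nonneg (hGv x) (hGvP x v)
  have key : ∀ t x v : ℝ, HasDerivAt (fun v => G (x - deriv g v * t) v)
      (-(deriv (deriv g) v * t) * fderiv ℝ f (x - deriv g v * t, v) (1, 0)
        + fderiv ℝ f (x - deriv g v * t, v) (0, 1)) v := by
    intro t x v
    have h1 : HasDerivAt (fun v => x - deriv g v * t) (-(deriv (deriv g) v * t)) v := by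
      simpa using ((hg'd v).hasDerivAt.mul_const t).const_sub x
    have h2 : HasDerivAt (fun v : ℝ => (x - deriv g v * t, v))
        ((-(deriv (deriv g) v * t), 1)) v := HasDerivAt.prodMk h1 (hasDerivAt_id v)
    have h3 := (hfd _).hasFDerivAt.comp_hasDerivAt v h2
    refine HasDerivAt.congr_deriv h3 ?_
    have heq : ((-(deriv (deriv g) v * t), (1:ℝ)) : ℝ × ℝ)
        = (-(deriv (deriv g) v * t)) • ((1:ℝ), (0:ℝ)) + (1:ℝ) • ((0:ℝ), (1:ℝ)) := by
      simp [Prod.ext_iff]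
    rw [heq, map_add, map_smul, map_smul]
    simp [smul_eq_mul]
  constructor
  · intro h x v
    rw [hGx]
    by_contra hpos
    push_neg at hpos
    set A := fderiv ℝ f (x, v) (1, 0) with hA
    set B := fderiv ℝ f (x, v) (0, 1) with hB
    set c := deriv (deriv g) v with hc
    have hc0 : 0 < c := hconv v
    set t := (B + 1) / (c * A) with ht
    have hca : 0 < c * A := mul_pos hc0 hpos
    have ht0 : 0 ≤ t := le_of_lt (div_pos (by linarith [hB0 x v]) hca)
    have hmono := h t ht0 (x + deriv g v * t)
    have hder := key t (x + deriv g v * t) v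
    have hx : x + deriv g v * t - deriv g v * t = x := by ring
    rw [hx] at hder
    have hnn : 0 ≤ -(c * t) * A + B := mono_hasDerivAt_nonneg hmono hder
    have : c * t * A = B + 1 := by
      rw [ht]; field_simp
    nlinarith
  · intro h t ht x
    refine monotone_of_deriv_nonneg (fun v => (key t x v).differentiableAt) (fun v => ?_)
    rw [(key t x v).deriv]
    have h1 : fderiv ℝ f (x - deriv g v * t, v) (1, 0) ≤ 0 := by
      rw [← hGx]; exact h _ v
    have h2 := hB0 (x - deriv g v * t) v
    have h3 := (hconv v).le
    nlinarith [mul_nonneg (mul_nonneg h3 ht) (neg_nonneg.2 h1)]
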